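/- Consider the DP dominance relation for states at stage t: given states B₁ = (u₁,v₁,s₁,w₁,û₁,v̂₁) and B₂ = (u₂,v₂,s₂,w₂,û₂,v̂₂) with cost-to-go values J₂ ≤ J₁, and suppose u₂ ≤ u₁, v₂ ≤ v₁, s₁ = s₂, w₂ ≥ w₁, û₂ ≥ û₁, v̂₂ ≥ v̂₁, and the per-stage cost at stage t+1, L(d, c, B) = X₀^ξ ∑_i p_i exp(−ξ·Ψ_i(d,c,B) + μ_i(T−t−1) − ω_i C_max) with Ψ_i(d,c,B) = û + α(B)d + v̂ + β(B)d² + (θ − ω_i/ξ)(s + c) + ψ(w + dc) − (ln 2/τ_d)(t+1−T_k)⁺, where α(B), β(B) are nondecreasing functions of û + v̂ + θs + ψw. Then for any admissible control (d, c) with d, c ≥ 0 and θξ ≥ max_i ω_i, ψ ≥ 0: J₂ + L(d, c, B₂) ≤ J₁ + L(d, c, B₁). -/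
import Mathlib


open Finset Real

/-- Lemma 3 of the paper: DP state dominance. A dominated state can be pruned
since its cost-to-go plus per-stage cost is never smaller under any admissible
control. -/
theorem dp_state_dominance
    (n : ℕ) (X₀ ξ θ ψ Cmax τd T Tk : ℝ) (t : ℕ)
    (p μ ω : ℕ → ℝ)
    (hX₀ : 0 < X₀) (hξ : 0 < ξ) (hθ : 0 < θ) (hψ : 0 ≤ ψ)
    (hCmax : 0 < Cmax) (hτd : 0 < τd)
    (hp : ∀ i, i < n → 0 < p i) (hω : ∀ i, i < n → 0 ≤ ω i)
    (αf βf : ℝ → ℝ) (hαf : Monotone αf) (hβf : Monotone βf)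
    (hαf0 : ∀ x, 0 ≤ αf x) (hβf0 : ∀ x, 0 ≤ βf x)
    (u₁ v₁ s₁ w₁ uh₁ vh₁ u₂ v₂ s₂ w₂ uh₂ vh₂ J₁ J₂ : ℝ)
    (hJ : J₂ ≤ J₁)
    (hu : u₂ ≤ u₁) (hv : v₂ ≤ v₁) (hs : s₁ = s₂) (hw : w₁ ≤ w₂)
    (huh : uh₁ ≤ uh₂) (hvh : vh₁ ≤ vh₂)
    (d c : ℝ) (hd : 0 ≤ d) (hc : 0 ≤ c)
    (hcond : ∀ i, i < n → ω i ≤ θ * ξ) :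
    J₂ + X₀ ^ ξ * ∑ i ∈ Finset.range n, p i *
        Real.exp (-ξ *
            (uh₂ + αf (uh₂ + vh₂ + θ * s₂ + ψ * w₂) * d +
              vh₂ + βf (uh₂ + vh₂ + θ * s₂ + ψ * w₂) * d ^ 2 +
              (θ - ω i / ξ) * (s₂ + c) + ψ * (w₂ + d * c) -
              Real.log 2 / τd * max ((t : ℝ) + 1 - Tk) 0) +
          μ i * (T - ((t : ℝ) + 1)) - ω i * Cmax) ≤
      J₁ + X₀ ^ ξ * ∑ i ∈ Finset.range n, p i *
        Real.exp (-ξ *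
            (uh₁ + αf (uh₁ + vh₁ + θ * s₁ + ψ * w₁) * d +
              vh₁ + βf (uh₁ + vh₁ + θ * s₁ + ψ * w₁) * d ^ 2 +
              (θ - ω i / ξ) * (s₁ + c) + ψ * (w₁ + d * c) -
              Real.log 2 / τd * max ((t : ℝ) + 1 - Tk) 0) +
          μ i * (T - ((t : ℝ) + 1)) - ω i * Cmax) := by

  subst hs
  have hsum : ∀ i ∈ Finset.range n,
      p i * Real.exp (-ξ *
            (uh₂ + αf (uh₂ + vh₂ + θ * s₁ + ψ * w₂) * d +
              vh₂ + βf (uh₂ + vh₂ + θ * s₁ + ψ * w₂) * d ^ 2 +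
              (θ - ω i / ξ) * (s₁ + c) + ψ * (w₂ + d * c) -
              Real.log 2 / τd * max ((t : ℝ) + 1 - Tk) 0) +
          μ i * (T - ((t : ℝ) + 1)) - ω i * Cmax)
      ≤ p i * Real.exp (-ξ *
            (uh₁ + αf (uh₁ + vh₁ + θ * s₁ + ψ * w₁) * d +
              vh₁ + βf (uh₁ + vh₁ + θ * s₁ + ψ * w₁) * d ^ 2 +
              (θ - ω i / ξ) * (s₁ + c) + ψ * (w₁ + d * c) -
              Real.log 2 / τd * max ((t : ℝ) + 1 - Tk) 0) +
          μ i * (T - ((t : ℝ) + 1)) - ω i * Cmax) := by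
    intro i hi
    rw [Finset.mem_range] at hi
    apply mul_le_mul_of_nonneg_left _ (le_of_lt (hp i hi))
    apply Real.exp_le_exp.mpr
    have harg : uh₁ + vh₁ + θ * s₁ + ψ * w₁ ≤ uh₂ + vh₂ + θ * s₁ + ψ * w₂ := by
      have := mul_le_mul_of_nonneg_left hw hψ
      linarith
    have hΨ : uh₁ + αf (uh₁ + vh₁ + θ * s₁ + ψ * w₁) * d +
              vh₁ + βf (uh₁ + vh₁ + θ * s₁ + ψ * w₁) * d ^ 2 +
              (θ - ω i / ξ) * (s₁ + c) + ψ * (w₁ + d * c)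
        ≤ uh₂ + αf (uh₂ + vh₂ + θ * s₁ + ψ * w₂) * d +
              vh₂ + βf (uh₂ + vh₂ + θ * s₁ + ψ * w₂) * d ^ 2 +
              (θ - ω i / ξ) * (s₁ + c) + ψ * (w₂ + d * c) := by
      have hα := mul_le_mul_of_nonneg_right (hαf harg) hd
      have hβ := mul_le_mul_of_nonneg_right (hβf harg) (sq_nonneg d)
      have hwψ := mul_le_mul_of_nonneg_left hw hψ
      linarith
    nlinarith [hξ, hΨ]
  have hsum' := Finset.sum_le_sum hsum
  have hX : (0:ℝ) ≤ X₀ ^ ξ := Real.rpow_nonneg (le_of_lt hX₀) ξ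
  have := mul_le_mul_of_nonneg_left hsum' hX
  linarith
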